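/- Let m ≥ 2 and q ≥ 2 be integers (so that mq − 1 and q are coprime). Then: (i) ⌈k(mq−1)/q⌉ = km for all integers k with 1 ≤ k ≤ q − 1; (ii) for every integer t ≥ 0, L^t·U·L^{m−1} = [[m, 1],[(t+1)m − 1, t+1]], a matrix [[a,b],[c,d]] with ad − bc = 1 and ad + bc = 2(t+1)m − 1. Consequently the middle-tunnel slope sequence of the (mq−1, q) torus knot, namely [1/(2m−1)], 4m−1, 6m−1, …, 2m(q−1)−1, coincides with its upper-tunnel slope sequence. -/
import Mathlib


/-- The matrix `U = [[1,1],[0,1]]`. -/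
def U : Matrix (Fin 2) (Fin 2) ℤ := !![1, 1; 0, 1]

/-- The matrix `L = [[1,0],[1,1]]`. -/
def L : Matrix (Fin 2) (Fin 2) ℤ := !![1, 0; 1, 1]

lemma Lpow (n : ℕ) : L ^ n = !![1, 0; (n : ℤ), 1] := by
  induction n with
  | zero => simp [Matrix.one_fin_two]
  | succ k ih =>
    rw [pow_succ, ih, L, Matrix.mul_fin_two]
    push_cast
    norm_num

/-- For `m, q ≥ 2`: `mq − 1` and `q` are coprime; (i) `⌈k(mq−1)/q⌉ = km` for
`1 ≤ k ≤ q − 1`; (ii) for every `t ≥ 0`, `L^t·U·L^(m−1) = [[m, 1],[(t+1)m−1, t+1]]`,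
a matrix `[[a,b],[c,d]]` with `ad − bc = 1` and `ad + bc = 2(t+1)m − 1`. -/
theorem stmt10 (m q : ℕ) (hm : 2 ≤ m) (hq : 2 ≤ q) :
    Nat.Coprime (m * q - 1) q ∧
    (∀ k : ℕ, 1 ≤ k → k ≤ q - 1 →
      ⌈((k : ℚ) * ((m : ℚ) * q - 1)) / q⌉ = (k : ℤ) * m) ∧
    (∀ t : ℕ,
      L ^ t * U * L ^ (m - 1) =
        !![(m : ℤ), 1; ((t : ℤ) + 1) * m - 1, (t : ℤ) + 1] ∧
      (L ^ t * U * L ^ (m - 1)) 0 0 * (L ^ t * U * L ^ (m - 1)) 1 1 -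
        (L ^ t * U * L ^ (m - 1)) 0 1 * (L ^ t * U * L ^ (m - 1)) 1 0 = 1 ∧
      (L ^ t * U * L ^ (m - 1)) 0 0 * (L ^ t * U * L ^ (m - 1)) 1 1 +
        (L ^ t * U * L ^ (m - 1)) 0 1 * (L ^ t * U * L ^ (m - 1)) 1 0 =
          2 * ((t : ℤ) + 1) * m - 1) := by
  refine ⟨?_, ?_, ?_⟩
  · rw [← Nat.isCoprime_iff_coprime]
    refine ⟨-1, m, ?_⟩
    have h1 : 1 ≤ m * q := by nlinarith
    push_cast [h1]
    ring
  · intro k hk1 hk2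
    have hkq : k < q := by omega
    have hq0 : (0 : ℚ) < (q : ℚ) := by positivity
    rw [Int.ceil_eq_iff]
    constructor
    · rw [lt_div_iff₀ hq0]
      have : (k : ℚ) < q := by exact_mod_cast hkq
      push_cast
      nlinarith [this, hq0]
    · rw [div_le_iff₀ hq0]
      have : (1 : ℚ) ≤ k := by exact_mod_cast hk1
      push_cast
      nlinarith [this, hq0]
  · intro t
    have hM : L ^ t * U * L ^ (m - 1) =
        !![(m : ℤ), 1; ((t : ℤ) + 1) * m - 1, (t : ℤ) + 1] := by
      have hm1 : ((m - 1 : ℕ) : ℤ) = (m : ℤ) - 1 := by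
        have : 1 ≤ m := by omega
        push_cast [this]; ring
      rw [Lpow, Lpow, hm1, U, Matrix.mul_fin_two, Matrix.mul_fin_two]
      norm_num
      ring
    refine ⟨hM, ?_, ?_⟩ <;> rw [hM] <;> simp <;> ring
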